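/- One-step inexact descent estimate: Under the standing assumptions, let y ∈ int dom φ ∩ X, λ ≥ 0, η ≥ 0, μ ≥ 0, ν ≥ 0, and let (x*, x̃*) be a pair with x* ∈ X ∩ int dom φ, x̃* ∈ dom P ∩ dom φ, such that there exists Δ ∈ ∂_ν P(x̃*) + ∇f(y) + λ(∇φ(x*) − ∇φ(y)) with ‖Δ‖ ≤ η and D_φ(x̃*, x*) ≤ μ. Then for every x ∈ dom P ∩ dom φ one has F(x̃*) − F(x) ≤ λ·D_φ(x,y) − λ·D_φ(x,x*) − (λ−L)·D_φ(x̃*,y) + η·‖x̃* − x‖ + λμ + ν. -/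

import Mathlib

open Filter Topology RealInnerProductSpace

/-- The Bregman distance associated with the kernel `φ` whose gradient map is `gφ`. -/
noncomputable def breg {E : Type*} [NormedAddCommGroup E] [InnerProductSpace ℝ E]
    (φ : E → ℝ) (gφ : E → E) (x y : E) : ℝ :=
  φ x - φ y - ⟪gφ y, x - y⟫

/-- The ν-subdifferential of `P` (a proper function with effective domain `domP`) at `x`. -/
def nuSubdiff {E : Type*} [NormedAddCommGroup E] [InnerProductSpace ℝ E]
    (P : E → ℝ) (domP : Set E) (ν : ℝ) (x : E) : Set E :=
  {d : E | ∀ u ∈ domP, P x + ⟪d, u - x⟫ - ν ≤ P u}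

open Classical in
/-- Extension of a real-valued function with effective domain `dom` to an `EReal`-valued
function taking the value `⊤` outside `dom`. -/
noncomputable def extFun {E : Type*} (g : E → ℝ) (dom : Set E) : E → EReal :=
  fun x => if x ∈ dom then (g x : EReal) else ⊤

/-- `φ` (with effective domain `domφ` and gradient map `gφ`) is essentially smooth. -/
def EssentiallySmooth {E : Type*} [NormedAddCommGroup E] [InnerProductSpace ℝ E]
    [FiniteDimensional ℝ E] (φ : E → ℝ) (domφ : Set E) (gφ : E → E) : Prop :=
  (interior domφ).Nonempty ∧
  (∀ x ∈ interior domφ, HasGradientAt φ (gφ x) x) ∧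
  ∀ (u : ℕ → E) (u₀ : E), (∀ n, u n ∈ interior domφ) →
    Tendsto u atTop (𝓝 u₀) → u₀ ∈ frontier (interior domφ) →
    Tendsto (fun n => ‖gφ (u n)‖) atTop atTop

/-- The standing assumptions (Assumption A) for the problem `inf {P x + f x : x ∈ Q}`. -/
structure Standing {E : Type*} [NormedAddCommGroup E] [InnerProductSpace ℝ E]
    [FiniteDimensional ℝ E] (Q domφ domP domf X : Set E)
    (φ P f : E → ℝ) (gφ gf : E → E) (L : ℝ) : Prop where
  hQclosed : IsClosed Q
  hQconv : Convex ℝ Q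
  hQint : (interior Q).Nonempty
  hφconv : ConvexOn ℝ domφ φ
  hφstrict : StrictConvexOn ℝ (interior domφ) φ
  hφsmooth : EssentiallySmooth φ domφ gφ
  hφQ : closure domφ = Q
  hPne : domP.Nonempty
  hPconv : ConvexOn ℝ domP P
  hPclosed : LowerSemicontinuous (extFun P domP)
  hPQ : (domP ∩ interior Q).Nonempty
  hfconv : ConvexOn ℝ domf f
  hfclosed : LowerSemicontinuous (extFun f domf)
  hfdom : domφ ⊆ domf
  hfgrad : ∀ x ∈ interior domφ, HasGradientAt f (gf x) x
  hXclosed : IsClosed X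
  hXconv : Convex ℝ X
  hXsup : domP ∩ domφ ⊆ X
  hLnn : 0 ≤ L
  hrel : ∀ u ∈ interior domφ ∩ X, ∀ v ∈ domφ ∩ X,
    f v ≤ f u + ⟪gf u, v - u⟫ + L * breg φ gφ v u

/-- The iBPG iterates with inexactness tolerance sequences `η`, `μ`, `ν`. -/
structure IBPGIter {E : Type*} [NormedAddCommGroup E] [InnerProductSpace ℝ E]
    [FiniteDimensional ℝ E] (domφ domP X : Set E) (φ P : E → ℝ) (gφ gf : E → E) (L : ℝ)
    (η μ ν : ℕ → ℝ) (x xt : ℕ → E) : Prop where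
  hη : ∀ k, 0 ≤ η k
  hμ : ∀ k, 0 ≤ μ k
  hν : ∀ k, 0 ≤ ν k
  hx : ∀ k, x k ∈ X ∩ interior domφ
  hxt : ∀ k, xt k ∈ domP ∩ domφ
  hinex : ∀ k, ∃ d ∈ nuSubdiff P domP (ν k) (xt (k+1)),
    ‖d + gf (x k) + L • (gφ (x (k+1)) - gφ (x k))‖ ≤ η k
  hdist : ∀ k, breg φ gφ (xt (k+1)) (x (k+1)) ≤ μ k

/-- Gradient inequality for a convex function at a point of differentiability. -/
lemma grad_convex_ineq {E : Type*} [NormedAddCommGroup E] [InnerProductSpace ℝ E]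
    [CompleteSpace E]
    {s : Set E} {f : E → ℝ} (hf : ConvexOn ℝ s f) {y g x : E}
    (hg : HasGradientAt f g y) (hy : y ∈ s) (hx : x ∈ s) :
    f y + ⟪g, x - y⟫ ≤ f x := by
  have hd : HasDerivAt (fun t : ℝ => f (y + t • (x - y))) ⟪g, x - y⟫ 0 := by
    have h1 : HasDerivAt (fun t : ℝ => y + t • (x - y)) (x - y) 0 := by
      simpa using ((hasDerivAt_id (0 : ℝ)).smul_const (x - y)).const_add y
    have h2 : HasFDerivAt f (InnerProductSpace.toDual ℝ E g) (y + (0 : ℝ) • (x - y)) := by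
      simpa using hg.hasFDerivAt
    have := h2.comp_hasDerivAt 0 h1
    exact this
  have hsl : Tendsto (slope (fun t : ℝ => f (y + t • (x - y))) 0) (𝓝[>] (0 : ℝ))
      (𝓝 ⟪g, x - y⟫) := by
    have := hasDerivAt_iff_tendsto_slope.mp hd
    exact this.mono_left (nhdsWithin_mono _ fun t ht => ne_of_gt ht)
  have hev : ∀ᶠ t in 𝓝[>] (0 : ℝ),
      slope (fun t : ℝ => f (y + t • (x - y))) 0 t ≤ f x - f y := by
    filter_upwards [Ioc_mem_nhdsGT_of_mem (Set.left_mem_Ico.mpr one_pos)] with t ht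
    have ht0 : (0 : ℝ) < t := ht.1
    have hcomb : f (y + t • (x - y)) ≤ (1 - t) * f y + t * f x := by
      have heq : y + t • (x - y) = (1 - t) • y + t • x := by
        rw [smul_sub, sub_smul, one_smul]; abel
      rw [heq]
      exact hf.2 hy hx (by linarith [ht.2]) (le_of_lt ht0) (by ring)
    have : f (y + t • (x - y)) - f (y + (0:ℝ) • (x - y)) ≤ t * (f x - f y) := by
      simp only [zero_smul, add_zero]; nlinarith
    rw [slope_def_field]
    simp only [zero_smul, add_zero, div_eq_iff (ne_of_gt ht0)] at *
    rw [sub_zero, div_le_iff₀ ht0]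
    nlinarith [this]
  have : ⟪g, x - y⟫ ≤ f x - f y := le_of_tendsto hsl hev
  linarith

/-- **One-step inexact descent estimate** (Lemma 2.4). Under the standing assumptions, if
`y ∈ int dom φ ∩ X`, `λ, η, μ, ν ≥ 0`, and `(x*, x̃*)` is a pair of approximate solutions with
`x* ∈ X ∩ int dom φ`, `x̃* ∈ dom P ∩ dom φ`, such that some
`Δ ∈ ∂_ν P(x̃*) + ∇f(y) + λ(∇φ(x*) − ∇φ(y))` satisfies `‖Δ‖ ≤ η`, and `D_φ(x̃*, x*) ≤ μ`, then
for every `x ∈ dom P ∩ dom φ`,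
`F(x̃*) − F(x) ≤ λ D_φ(x,y) − λ D_φ(x,x*) − (λ−L) D_φ(x̃*,y) + η‖x̃* − x‖ + λμ + ν`,
where `F = P + f`. -/
theorem one_step_inexact_descent
    {E : Type*} [NormedAddCommGroup E] [InnerProductSpace ℝ E] [FiniteDimensional ℝ E]
    (Q domφ domP domf X : Set E) (φ P f : E → ℝ) (gφ gf : E → E) (L : ℝ)
    (hstand : Standing Q domφ domP domf X φ P f gφ gf L)
    (y : E) (hy : y ∈ interior domφ ∩ X)
    (lam η μ ν : ℝ) (hlam : 0 ≤ lam) (hη : 0 ≤ η) (hμ : 0 ≤ μ) (hν : 0 ≤ ν)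
    (xs xts : E) (hxs : xs ∈ X ∩ interior domφ) (hxts : xts ∈ domP ∩ domφ)
    (hinex : ∃ d ∈ nuSubdiff P domP ν xts, ‖d + gf y + lam • (gφ xs - gφ y)‖ ≤ η)
    (hdist : breg φ gφ xts xs ≤ μ) :
    ∀ x ∈ domP ∩ domφ,
      (P xts + f xts) - (P x + f x) ≤
        lam * breg φ gφ x y - lam * breg φ gφ x xs - (lam - L) * breg φ gφ xts y
          + η * ‖xts - x‖ + lam * μ + ν := by
  intro x hx
  obtain ⟨d, hd, hΔ⟩ := hinex
  -- approximate subgradient inequality at x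
  have h1 : P xts - P x ≤ ⟪d, xts - x⟫ + ν := by
    have := hd x hx.1
    have hsym : ⟪d, x - xts⟫ = -⟪d, xts - x⟫ := by
      rw [← inner_neg_right]; congr 1; abel
    linarith [this, hsym.le, hsym.ge]
  -- convexity gradient inequality for f at y
  have hyint : y ∈ interior domφ := hy.1
  have hfy : f y + ⟪gf y, x - y⟫ ≤ f x :=
    grad_convex_ineq hstand.hfconv (hstand.hfgrad y hyint)
      (hstand.hfdom (interior_subset hyint)) (hstand.hfdom hx.2)
  -- relative smoothness at (y, xts)
  have hrel : f xts ≤ f y + ⟪gf y, xts - y⟫ + L * breg φ gφ xts y :=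
    hstand.hrel y ⟨hyint, hy.2⟩ xts ⟨hxts.2, hstand.hXsup hxts⟩
  have h2 : f xts - f x ≤ ⟪gf y, xts - x⟫ + L * breg φ gφ xts y := by
    have : ⟪gf y, xts - y⟫ - ⟪gf y, x - y⟫ = ⟪gf y, xts - x⟫ := by
      rw [← inner_sub_right]; congr 1; abel
    linarith
  -- decompose the inner product with d
  have h3 : ⟪d, xts - x⟫ = ⟪d + gf y + lam • (gφ xs - gφ y), xts - x⟫
      - ⟪gf y, xts - x⟫ - lam * ⟪gφ xs - gφ y, xts - x⟫ := by
    simp only [inner_add_left, real_inner_smul_left]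
    ring
  -- Cauchy–Schwarz
  have h4 : ⟪d + gf y + lam • (gφ xs - gφ y), xts - x⟫ ≤ η * ‖xts - x‖ := by
    calc ⟪d + gf y + lam • (gφ xs - gφ y), xts - x⟫
        ≤ ‖d + gf y + lam • (gφ xs - gφ y)‖ * ‖xts - x‖ := real_inner_le_norm _ _
      _ ≤ η * ‖xts - x‖ := mul_le_mul_of_nonneg_right hΔ (norm_nonneg _)
  -- three-point identity
  have h5 : ⟪gφ xs - gφ y, xts - x⟫ = breg φ gφ x xs - breg φ gφ x y
      + breg φ gφ xts y - breg φ gφ xts xs := by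
    simp only [breg, inner_sub_left, inner_sub_right]
    ring
  have h5' : lam * ⟪gφ xs - gφ y, xts - x⟫ = lam * breg φ gφ x xs - lam * breg φ gφ x y
      + lam * breg φ gφ xts y - lam * breg φ gφ xts xs := by
    rw [h5]; ring
  have h6 : lam * breg φ gφ xts xs ≤ lam * μ := mul_le_mul_of_nonneg_left hdist hlam
  linarith
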